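/- Let G be a finite simple graph and κ: V(G) → ℤ with 0 ≤ κ(u) ≤ d(u) for all vertices u. Then β(G,1,κ) ≤ ∑_{u∈V(G)} (d(u)−κ(u))(d(u)−κ(u)+1)/(2(d(u)+1)), where β(G,1,κ) is the minimum total increase ∑_u ι(u) over functions ι: V(G) → ℤ_{≥0} such that V(G) is (κ+ι)-degenerate. -/

import Mathlib

variable {V : Type*} [Fintype V] [DecidableEq V]

/-- A list of vertices witnesses κ-degeneracy: each vertex has at most κ of it
neighbors among the earlier vertices of the ordering. -/
def DegenList (G : SimpleGraph V) [DecidableRel G.Adj] (κ : V → ℤ) (l : List V) : Prop :=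
  l.Nodup ∧ ∀ i : Fin l.length,
    ((((l.take i).toFinset).filter (fun v => G.Adj (l.get i) v)).card : ℤ) ≤ κ (l.get i)

/-- A set of vertices is κ-degenerate if it admits a suitable linear ordering. -/
def IsDegen (G : SimpleGraph V) [DecidableRel G.Adj] (κ : V → ℤ) (I : Finset V) : Prop :=
  ∃ l : List V, l.toFinset = I ∧ DegenList G κ l

/-- Minimum total c-weighted increase ι making the whole vertex set (κ+ι)-degenerate. -/
noncomputable def betaW (G : SimpleGraph V) [DecidableRel G.Adj] (c : V → ℝ) (κ : V → ℤ) : ℝ :=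
  sInf {x : ℝ | ∃ ι : V → ℤ, (∀ u, 0 ≤ ι u) ∧
    IsDegen G (fun u => κ u + ι u) Finset.univ ∧ x = ∑ u : V, c u * (ι u : ℝ)}

section AuxCGRV

lemma aux_rank {n m : ℕ} (T : Finset (Fin n)) (hT : T.card = m) {x : Fin n} (hx : x ∈ T) :
    (T.filter (fun y => y < x)).card = ((T.orderIsoOfFin hT).symm ⟨x, hx⟩ : ℕ) := by
  set e := T.orderIsoOfFin hT with he
  set r := e.symm ⟨x, hx⟩ with hr
  have hTf : T.filter (fun y => y < x) = (Finset.Iio r).image (fun i => (e i : Fin n)) := by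
    ext y
    simp only [Finset.mem_filter, Finset.mem_image, Finset.mem_Iio]
    constructor
    · rintro ⟨hyT, hyx⟩
      refine ⟨e.symm ⟨y, hyT⟩, e.symm.lt_iff_lt.mpr (by exact hyx), by simp⟩
    · rintro ⟨i, hir, rfl⟩
      refine ⟨(e i).2, ?_⟩
      have : e i < e r := e.lt_iff_lt.mpr hir
      simp [hr] at this
      exact this
  rw [hTf, Finset.card_image_of_injective _ (fun a b hab => e.injective (Subtype.ext hab)),
    Fin.card_Iio]

lemma aux_fiber {Ω : Type*} [Fintype Ω] [DecidableEq Ω] {m : ℕ}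
    (rk : Ω → Fin m) (Φ : Equiv.Perm Ω) (hΦ : ∀ ω, rk (Φ ω) = finRotate m (rk ω))
    (a : Fin m) :
    (Finset.univ.filter (fun ω => rk ω = a)).card
      = (Finset.univ.filter (fun ω => rk ω = finRotate m a)).card := by
  apply Finset.card_bij (fun ω _ => Φ ω)
  · intro ω hω
    simp only [Finset.mem_filter, Finset.mem_univ, true_and] at *
    rw [hΦ, hω]
  · intro a ha b hb hab
    exact Φ.injective hab
  · intro ω hω
    simp only [Finset.mem_filter, Finset.mem_univ, true_and] at *
    refine ⟨Φ.symm ω, ?_, by simp⟩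
    have := hΦ (Φ.symm ω)
    rw [Equiv.apply_symm_apply] at this
    rw [hω] at this
    exact (finRotate m).injective this.symm

open Fin.NatCast in
lemma aux_fiber_const {Ω : Type*} [Fintype Ω] [DecidableEq Ω] {m : ℕ}
    (rk : Ω → Fin (m + 1)) (Φ : Equiv.Perm Ω)
    (hΦ : ∀ ω, rk (Φ ω) = finRotate (m + 1) (rk ω)) (a b : Fin (m + 1)) :
    (Finset.univ.filter (fun ω => rk ω = a)).card
      = (Finset.univ.filter (fun ω => rk ω = b)).card := by
  have key : ∀ (t : ℕ) (c : Fin (m + 1)),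
      (Finset.univ.filter (fun ω => rk ω = c)).card
        = (Finset.univ.filter (fun ω => rk ω = c + (t : Fin (m+1)))).card := by
    intro t
    induction t with
    | zero => simp
    | succ k ih =>
      intro c
      have h1 := ih c
      have h2 := aux_fiber rk Φ hΦ (c + (k : Fin (m+1)))
      rw [h1, h2, finRotate_succ_apply]
      congr 1
      ext ω
      congr 1
      simp [add_assoc, Nat.cast_add, Nat.cast_one]
  have := key (b - a : Fin (m+1)).val a
  simpa [Fin.cast_val_eq_self] using this

lemma aux_sum {Ω : Type*} [Fintype Ω] [DecidableEq Ω] {m : ℕ}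
    (rk : Ω → Fin (m + 1)) (Φ : Equiv.Perm Ω)
    (hΦ : ∀ ω, rk (Φ ω) = finRotate (m + 1) (rk ω)) (g : Fin (m + 1) → ℝ) :
    ((m : ℝ) + 1) * ∑ ω : Ω, g (rk ω) = (Fintype.card Ω : ℝ) * ∑ a : Fin (m + 1), g a := by
  have hpart : ∑ ω : Ω, g (rk ω)
      = ∑ a : Fin (m+1), ∑ ω ∈ Finset.univ.filter (fun ω => rk ω = a), g (rk ω) :=
    (Finset.sum_fiberwise_of_maps_to (fun ω _ => Finset.mem_univ (rk ω)) _).symm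
  set c₀ := (Finset.univ.filter (fun ω => rk ω = (0 : Fin (m+1)))).card with hc₀
  have hfib : ∀ a : Fin (m+1), (Finset.univ.filter (fun ω => rk ω = a)).card = c₀ :=
    fun a => aux_fiber_const rk Φ hΦ a 0
  have hcard : Fintype.card Ω = (m + 1) * c₀ := by
    have := Finset.sum_fiberwise_of_maps_to (s := (Finset.univ : Finset Ω))
      (t := (Finset.univ : Finset (Fin (m+1)))) (g := rk)
      (fun ω _ => Finset.mem_univ (rk ω)) (fun _ : Ω => (1 : ℕ))
    simp only [Finset.sum_const, smul_eq_mul, mul_one] at this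
    rw [← Finset.card_univ, ← this]
    simp [hfib, Finset.sum_const]
  have hsum : ∑ ω : Ω, g (rk ω) = c₀ * ∑ a : Fin (m+1), g a := by
    rw [hpart, Finset.mul_sum]
    refine Finset.sum_congr rfl (fun a _ => ?_)
    rw [Finset.sum_congr rfl (fun ω hω => by
      simp only [Finset.mem_filter] at hω; rw [hω.2]), Finset.sum_const, hfib a]
    simp
  rw [hsum, hcard]
  push_cast
  ring

variable {n : ℕ}

/-- index of `π u` among the positions of `S`. -/
def rkOf (S : Finset V) (u : V) {m : ℕ} (hS : S.card = m + 1) (hu : u ∈ S)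
    (π : V ≃ Fin n) : Fin (m + 1) :=
  ((S.image π).orderIsoOfFin
      (by rw [Finset.card_image_of_injective _ π.injective, hS])).symm
    ⟨π u, Finset.mem_image_of_mem π hu⟩

omit [Fintype V] in
lemma rk_card (S : Finset V) (u : V) {m : ℕ} (hS : S.card = m + 1) (hu : u ∈ S)
    (π : V ≃ Fin n) :
    (S.filter (fun w => π w < π u)).card = (rkOf S u hS hu π : ℕ) := by
  have h1 : (S.image π).filter (fun y => y < π u)
      = (S.filter (fun w => π w < π u)).image π := Finset.filter_image
  have h2 := aux_rank (S.image π)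
    (by rw [Finset.card_image_of_injective _ π.injective, hS])
    (Finset.mem_image_of_mem π hu)
  rw [h1, Finset.card_image_of_injective _ π.injective] at h2
  exact h2

/-- cyclic rotation of the positions in `T`. -/
def cOf (T : Finset (Fin n)) {m : ℕ} (hT : T.card = m + 1) : Equiv.Perm (Fin n) :=
  (finRotate (m + 1)).extendDomain (T.orderIsoOfFin hT).toEquiv

lemma cOf_congr {T₁ T₂ : Finset (Fin n)} {m : ℕ} (h₁ : T₁.card = m + 1) (h₂ : T₂.card = m + 1)
    (h : T₁ = T₂) : cOf T₁ h₁ = cOf T₂ h₂ := by subst h; rfl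

lemma cOf_apply_mem (T : Finset (Fin n)) {m : ℕ} (hT : T.card = m + 1) {x : Fin n}
    (hx : x ∈ T) :
    cOf T hT x = ((T.orderIsoOfFin hT) (finRotate (m + 1)
      ((T.orderIsoOfFin hT).symm ⟨x, hx⟩)) : Fin n) := by
  exact Equiv.Perm.extendDomain_apply_subtype _ _ hx

lemma cOf_mem (T : Finset (Fin n)) {m : ℕ} (hT : T.card = m + 1) {x : Fin n}
    (hx : x ∈ T) : cOf T hT x ∈ T := by
  rw [cOf_apply_mem T hT hx]
  exact ((T.orderIsoOfFin hT) _).2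

lemma cOf_image (T : Finset (Fin n)) {m : ℕ} (hT : T.card = m + 1) :
    T.image (cOf T hT) = T := by
  apply Finset.eq_of_subset_of_card_le
  · intro y hy
    rcases Finset.mem_image.mp hy with ⟨x, hx, rfl⟩
    exact cOf_mem T hT hx
  · rw [Finset.card_image_of_injective _ (cOf T hT).injective]

variable (S : Finset V) (u : V) {m : ℕ}

omit [Fintype V] in
lemma card_image (hS : S.card = m + 1) (π : V ≃ Fin n) :
    (S.image π).card = m + 1 := by
  rw [Finset.card_image_of_injective _ π.injective, hS]

omit [Fintype V] in
lemma image_trans (hS : S.card = m + 1) (π : V ≃ Fin n) :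
    S.image (π.trans (cOf (S.image π) (card_image S hS π))) = S.image π := by
  have : S.image (π.trans (cOf (S.image π) (card_image S hS π)))
      = (S.image π).image (cOf (S.image π) (card_image S hS π)) := by
    rw [Finset.image_image]; rfl
  rw [this, cOf_image]

omit [Fintype V] in
lemma image_trans_symm (hS : S.card = m + 1) (π : V ≃ Fin n) :
    S.image (π.trans ((cOf (S.image π) (card_image S hS π))⁻¹ : Equiv.Perm (Fin n)))
      = S.image π := by
  have h1 : S.image (π.trans ((cOf (S.image π) (card_image S hS π))⁻¹ : Equiv.Perm (Fin n)))
      = (S.image π).image ((cOf (S.image π) (card_image S hS π))⁻¹ : Equiv.Perm (Fin n)) := by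
    rw [Finset.image_image]; rfl
  rw [h1]
  have key : ((S.image π).image (cOf (S.image π) (card_image S hS π))).image
      ((cOf (S.image π) (card_image S hS π))⁻¹ : Equiv.Perm (Fin n)) = S.image π := by
    rw [Finset.image_image]
    ext y
    simp
  rw [cOf_image] at key
  exact key

/-- The rotation bijection on orderings. -/
def ΦOf (hS : S.card = m + 1) : Equiv.Perm (V ≃ Fin n) where
  toFun π := π.trans (cOf (S.image π) (card_image S hS π))
  invFun π := π.trans ((cOf (S.image π) (card_image S hS π))⁻¹ : Equiv.Perm (Fin n))
  left_inv π := by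
    show (π.trans (cOf (S.image π) (card_image S hS π))).trans
        ((cOf (S.image (π.trans (cOf (S.image π) (card_image S hS π))))
          (card_image S hS _))⁻¹ : Equiv.Perm (Fin n)) = π
    rw [cOf_congr (card_image S hS _) (card_image S hS π) (image_trans S hS π)]
    ext v
    simp
  right_inv π := by
    show (π.trans ((cOf (S.image π) (card_image S hS π))⁻¹ : Equiv.Perm (Fin n))).trans
        (cOf (S.image (π.trans ((cOf (S.image π) (card_image S hS π))⁻¹ : Equiv.Perm (Fin n))))
          (card_image S hS _)) = π
    rw [cOf_congr (card_image S hS _) (card_image S hS π) (image_trans_symm S hS π)]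
    ext v
    simp

omit [Fintype V] in
lemma rk_equivariant (hS : S.card = m + 1) (hu : u ∈ S) (π : V ≃ Fin n) :
    rkOf S u hS hu (ΦOf S hS π) = finRotate (m + 1) (rkOf S u hS hu π) := by
  set π' := ΦOf S hS π with hπ'
  set T := S.image π with hTdef
  set hT : T.card = m + 1 := card_image S hS π
  set e := T.orderIsoOfFin hT with he
  set c := cOf T hT with hcdef
  have hπ'app : ∀ v, π' v = c (π v) := fun v => rfl
  have himg : S.image π' = T := image_trans S hS π
  apply Fin.ext
  rw [← rk_card S u hS hu π']
  have hcu : c (π u) ∈ T := cOf_mem T hT (Finset.mem_image_of_mem π hu)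
  have h1 : (S.filter (fun w => π' w < π' u)).card
      = (T.filter (fun y => y < c (π u))).card := by
    have h1' : (T.filter (fun y => y < c (π u)))
        = ((S.image π').filter (fun y => y < π' u)) := by
      rw [himg, hπ'app]
    rw [h1', Finset.filter_image, Finset.card_image_of_injective _ π'.injective]
  rw [h1, aux_rank T hT hcu]
  have h2 : (⟨c (π u), hcu⟩ : {x // x ∈ T})
      = e (finRotate (m + 1) (e.symm ⟨π u, Finset.mem_image_of_mem π hu⟩)) := by
    apply Subtype.ext
    exact cOf_apply_mem T hT (Finset.mem_image_of_mem π hu)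
  rw [h2]
  simp only [he, OrderIso.symm_apply_apply]
  rfl

end AuxCGRV

/-- Cordasco–Gargano–Rescigno–Vaccaro partial-incentives bound (unweighted). -/
theorem partial_incentives_bound (G : SimpleGraph V) [DecidableRel G.Adj]
    (κ : V → ℤ) (hκ : ∀ u, 0 ≤ κ u ∧ κ u ≤ (G.degree u : ℤ)) :
    betaW G (fun _ => (1 : ℝ)) κ ≤ ∑ u : V,
      (((G.degree u : ℝ) - κ u) * ((G.degree u : ℝ) - κ u + 1)) / (2 * (G.degree u + 1)) := by
  classical
  set n := Fintype.card V with hn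
  set R : (V ≃ Fin n) → V → ℕ :=
    fun π u => ((G.neighborFinset u).filter (fun w => π w < π u)).card with hR
  set cost : (V ≃ Fin n) → V → ℤ := fun π u => max 0 ((R π u : ℤ) - κ u) with hcost
  -- Step 1: every ordering π yields a feasible incentive assignment
  have hmem : ∀ π : V ≃ Fin n,
      (∑ u : V, ((cost π u : ℤ) : ℝ)) ∈ {x : ℝ | ∃ ι : V → ℤ, (∀ u, 0 ≤ ι u) ∧
        IsDegen G (fun u => κ u + ι u) Finset.univ ∧
        x = ∑ u : V, (fun _ => (1:ℝ)) u * (ι u : ℝ)} := by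
    intro π
    refine ⟨cost π, fun u => le_max_left _ _, ?_, by simp⟩
    set l : List V := (List.finRange n).map (fun i => π.symm i) with hl
    have hlen : l.length = n := by simp [hl]
    refine ⟨l, ?_, ?_, ?_⟩
    · ext v
      simp only [List.mem_toFinset, hl, List.mem_map, Finset.mem_univ, iff_true]
      exact ⟨π v, List.mem_finRange _, by simp⟩
    · exact (List.nodup_finRange n).map π.symm.injective
    · intro i
      set i' : Fin n := Fin.cast hlen i with hi'
      have hget : l.get i = π.symm i' := by
        simp [hl, hi']
        congr 1
      have hπget : π (l.get i) = i' := by rw [hget, Equiv.apply_symm_apply]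
      have htake : ∀ v, v ∈ l.take (i : ℕ) ↔ ((π v : ℕ) < (i : ℕ)) := by
        intro v
        rw [List.mem_take_iff_getElem]
        constructor
        · rintro ⟨j, hj, hjv⟩
          have hjn : j < n := lt_of_lt_of_le hj (le_trans (min_le_right _ _) hlen.le)
          have : l[j] = π.symm ⟨j, hjn⟩ := by
            simp [hl, List.getElem_map, List.getElem_finRange]
          rw [this] at hjv
          have : π v = ⟨j, hjn⟩ := by rw [← hjv, Equiv.apply_symm_apply]
          rw [this]
          exact lt_of_lt_of_le hj (min_le_left _ _)
        · intro h
          have hπvn : (π v : ℕ) < l.length := lt_of_lt_of_le (π v).2 hlen.ge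
          refine ⟨(π v : ℕ), lt_min h hπvn, ?_⟩
          simp [hl, List.getElem_map, List.getElem_finRange]
      have hset : ((l.take (i:ℕ)).toFinset.filter (fun v => G.Adj (l.get i) v))
          = (G.neighborFinset (l.get i)).filter (fun w => π w < π (l.get i)) := by
        ext v
        simp only [Finset.mem_filter, List.mem_toFinset, SimpleGraph.mem_neighborFinset]
        rw [htake v, hπget]
        constructor
        · rintro ⟨h1, h2⟩
          exact ⟨h2, h1⟩
        · rintro ⟨h1, h2⟩
          exact ⟨h2, h1⟩
      rw [hset]
      have : ((G.neighborFinset (l.get i)).filter (fun w => π w < π (l.get i))).card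
          = R π (l.get i) := rfl
      rw [this]
      show ((R π (l.get i) : ℕ) : ℤ) ≤ κ (l.get i) + cost π (l.get i)
      have h5 : (R π (l.get i) : ℤ) - κ (l.get i) ≤ cost π (l.get i) := le_max_right _ _
      omega
  -- bounded below
  have hbdd : BddBelow {x : ℝ | ∃ ι : V → ℤ, (∀ u, 0 ≤ ι u) ∧
      IsDegen G (fun u => κ u + ι u) Finset.univ ∧
      x = ∑ u : V, (fun _ => (1:ℝ)) u * (ι u : ℝ)} := by
    refine ⟨0, ?_⟩
    rintro x ⟨ι, hι, _, rfl⟩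
    exact Finset.sum_nonneg (fun u _ => by
      simp only [one_mul]
      exact_mod_cast hι u)
  -- Step 2: averaging. N = number of orderings
  set N := Fintype.card (V ≃ Fin n) with hN
  have hNpos : 0 < N := Fintype.card_pos_iff.mpr ⟨Fintype.equivFin V⟩
  have husum : ∀ u : V, ∑ π : V ≃ Fin n, ((cost π u : ℤ) : ℝ)
      = (N : ℝ) * ((((G.degree u : ℝ) - κ u) * ((G.degree u : ℝ) - κ u + 1)) /
          (2 * (G.degree u + 1))) := by
    intro u
    set d := G.degree u with hd
    set S : Finset V := insert u (G.neighborFinset u) with hS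
    have hun : u ∉ G.neighborFinset u := by
      simp [SimpleGraph.mem_neighborFinset]
    have hScard : S.card = d + 1 := by
      rw [hS, Finset.card_insert_of_notMem hun]
      rfl
    have huS : u ∈ S := Finset.mem_insert_self _ _
    have hRrk : ∀ π : V ≃ Fin n, R π u = (rkOf S u hScard huS π : ℕ) := by
      intro π
      rw [← rk_card S u hScard huS π]
      congr 1
      rw [hS, Finset.filter_insert, if_neg (lt_irrefl (π u))]
    set g : Fin (d + 1) → ℝ := fun a => ((max 0 ((a : ℤ) - κ u) : ℤ) : ℝ) with hg
    have key := aux_sum (fun π : V ≃ Fin n => rkOf S u hScard huS π) (ΦOf (n := n) S hScard)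
      (rk_equivariant (n := n) S u hScard huS) g
    have hrw : ∑ π : V ≃ Fin n, ((cost π u : ℤ) : ℝ)
        = ∑ π : V ≃ Fin n, g (rkOf S u hScard huS π) := by
      refine Finset.sum_congr rfl (fun π _ => ?_)
      simp only [hcost, hg, hRrk π]
    -- compute ∑ a, g a
    set k := (κ u).toNat with hk
    have hkκ : (k : ℤ) = κ u := Int.toNat_of_nonneg (hκ u).1
    have hkd : k ≤ d := by
      have := (hκ u).2
      omega
    have hgsum : ∑ a : Fin (d + 1), g a = (((d + 1 - k) * (d - k) : ℕ) : ℝ) / 2 := by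
      have h1 : ∑ a : Fin (d + 1), g a
          = ∑ i ∈ Finset.range (d + 1), ((max 0 ((i : ℤ) - κ u) : ℤ) : ℝ) :=
        Fin.sum_univ_eq_sum_range (fun i => ((max 0 ((i : ℤ) - κ u) : ℤ) : ℝ)) (d + 1)
      rw [h1]
      have hsplit : Finset.range (d + 1) = Finset.Ico 0 (d + 1) := by
        rw [Finset.range_eq_Ico]
      rw [hsplit, ← Finset.sum_Ico_consecutive _ (Nat.zero_le k) (by omega : k ≤ d + 1)]
      have hz : ∑ i ∈ Finset.Ico 0 k, ((max 0 ((i : ℤ) - κ u) : ℤ) : ℝ) = 0 := by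
        apply Finset.sum_eq_zero
        intro i hi
        simp only [Finset.mem_Ico] at hi
        have : (i : ℤ) - κ u ≤ 0 := by omega
        rw [max_eq_left this]
        simp
      rw [hz, zero_add, Finset.sum_Ico_eq_sum_range]
      have hterm : ∀ i, ((max 0 ((k + i : ℕ) - κ u : ℤ) : ℤ) : ℝ) = (i : ℝ) := by
        intro i
        have : ((k + i : ℕ) : ℤ) - κ u = (i : ℤ) := by push_cast; omega
        rw [this, max_eq_right (by positivity)]
        simp
      have h2 : ∑ i ∈ Finset.range (d + 1 - k), ((max 0 (((k + i : ℕ) : ℤ) - κ u) : ℤ) : ℝ)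
          = ∑ i ∈ Finset.range (d + 1 - k), (i : ℝ) := by
        refine Finset.sum_congr rfl (fun i _ => ?_)
        exact_mod_cast hterm i
      rw [h2]
      have h3 : (∑ i ∈ Finset.range (d + 1 - k), i) * 2 = (d + 1 - k) * (d - k) := by
        rw [Finset.sum_range_id_mul_two]
        have : d + 1 - k - 1 = d - k := by omega
        rw [this]
      have h4 : ∑ i ∈ Finset.range (d + 1 - k), (i : ℝ)
          = ((∑ i ∈ Finset.range (d + 1 - k), i : ℕ) : ℝ) := by push_cast; rfl
      rw [h4, eq_div_iff (by norm_num : (2:ℝ) ≠ 0)]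
      exact_mod_cast h3
    rw [hrw]
    have hd1 : ((d : ℝ) + 1) ≠ 0 := by positivity
    have : ∑ π : V ≃ Fin n, g (rkOf S u hScard huS π)
        = (N : ℝ) * (∑ a : Fin (d + 1), g a) / ((d : ℝ) + 1) := by
      field_simp at key ⊢
      linarith [key]
    rw [this, hgsum]
    have hκk : (κ u : ℝ) = (k : ℝ) := by exact_mod_cast hkκ.symm
    have hc1 : ((d + 1 - k : ℕ) : ℝ) = (d : ℝ) - k + 1 := by
      have h : d + 1 - k = (d - k) + 1 := by omega
      rw [h]
      push_cast [Nat.cast_sub hkd]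
      ring
    have hc2 : ((d - k : ℕ) : ℝ) = (d : ℝ) - k := by
      push_cast [Nat.cast_sub hkd]
      ring
    rw [Nat.cast_mul, hc1, hc2, hκk, mul_div_assoc, div_div,
      mul_comm ((d:ℝ) - (k:ℝ) + 1) ((d:ℝ) - (k:ℝ))]
  -- Step 3: pick a good ordering
  have hex : ∃ π : V ≃ Fin n, ∑ u : V, ((cost π u : ℤ) : ℝ) ≤ ∑ u : V,
      (((G.degree u : ℝ) - κ u) * ((G.degree u : ℝ) - κ u + 1)) / (2 * (G.degree u + 1)) := by
    set B := ∑ u : V, (((G.degree u : ℝ) - κ u) * ((G.degree u : ℝ) - κ u + 1)) /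
        (2 * (G.degree u + 1)) with hB
    have htot : ∑ π : V ≃ Fin n, ∑ u : V, ((cost π u : ℤ) : ℝ)
        ≤ ∑ π : V ≃ Fin n, B := by
      rw [Finset.sum_comm]
      rw [Finset.sum_const, Finset.card_univ, ← hN, nsmul_eq_mul, hB, Finset.mul_sum]
      exact le_of_eq (Finset.sum_congr rfl (fun u _ => husum u))
    have hne : (Finset.univ : Finset (V ≃ Fin n)).Nonempty :=
      Finset.univ_nonempty_iff.mpr ⟨Fintype.equivFin V⟩
    obtain ⟨π, _, hπ⟩ := Finset.exists_le_of_sum_le hne htot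
    exact ⟨π, hπ⟩
  obtain ⟨π, hπ⟩ := hex
  exact le_trans (csInf_le hbdd (hmem π)) hπ
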